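/- arXiv:1612.04316 — 2 statements merged into one kernel-verified Lean document; each statement's English description precedes it below -/
import Mathlib

section
/- Let n be a positive integer and let a and c be natural numbers with 2^(n-1) ≤ a < 2^n, c < 2^n, and c < a. Then the embedded inversion problem with n_b = n satisfiability bits has a solution in which every register fits its prescribed width: there exist natural numbers b < 2^n, b_f < 2^n, and r < a such that c·2^(2n) = a·(b·2^n + b_f) + r. -/
/-- If moreover `c < a`, the embedded inversion problem with `n_b = n`
has a solution in which every register fits its prescribed width. -/
theorem embedded_inversion_registers_fit (n a c : ℕ) (hn : 0 < n)
    (ha_lo : 2 ^ (n - 1) ≤ a) (ha_hi : a < 2 ^ n) (hc : c < 2 ^ n) (hca : c < a) :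
    ∃ b : ℕ, b < 2 ^ n ∧ ∃ b_f : ℕ, b_f < 2 ^ n ∧ ∃ r : ℕ, r < a ∧
      c * 2 ^ (2 * n) = a * (b * 2 ^ n + b_f) + r := by
  have ha : 0 < a := lt_of_le_of_lt (Nat.zero_le c) hca
  set q := c * 2 ^ (2 * n) / a with hq
  have hqlt : q < 2 ^ (2 * n) := by
    have : c * 2 ^ (2 * n) < a * 2 ^ (2 * n) :=
      Nat.mul_lt_mul_of_lt_of_le hca le_rfl (Nat.two_pow_pos _)
    exact Nat.div_lt_of_lt_mul (by linarith [this])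
  refine ⟨q / 2 ^ n, ?_, q % 2 ^ n, Nat.mod_lt _ (Nat.two_pow_pos _),
    c * 2 ^ (2 * n) % a, Nat.mod_lt _ ha, ?_⟩
  · have : q < 2 ^ n * 2 ^ n := by
      rw [← pow_add]; simpa [two_mul] using hqlt
    exact Nat.div_lt_of_lt_mul (by linarith)
  · have h1 : q / 2 ^ n * 2 ^ n + q % 2 ^ n = q := Nat.div_add_mod' q (2 ^ n)
    rw [h1]
    exact (Nat.div_add_mod (c * 2 ^ (2 * n)) a).symm
end

section
/- Let a, c, n, n_a, n_b, and c_f be natural numbers, and suppose the padded embedded equation holds: a·2^(n_a)·b̂ = c·2^(n + n_a + n_b) + c_f for some natural number b̂. Then 2^(n_a) divides c_f, and consequently b̂ satisfies the unpadded equation a·b̂ = c·2^(n + n_b) + c_f/2^(n_a). Hence ⌊c·2^(n + n_a + n_b) / (a·2^(n_a))⌋ = ⌊c·2^(n + n_b) / a⌋ whenever a ≠ 0: padding a with n_a extra 'enhanced precision' zero bits does not change the solution register b̂. -/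
/-- Padding `a` with `n_a` extra zero bits forces the last `n_a` bits of `c_f`
to vanish and does not change the solution register. -/
theorem enhanced_precision_padding (a c n n_a n_b c_f : ℕ) (bhat : ℕ)
    (h : a * 2 ^ n_a * bhat = c * 2 ^ (n + n_a + n_b) + c_f) :
    2 ^ n_a ∣ c_f ∧
    a * bhat = c * 2 ^ (n + n_b) + c_f / 2 ^ n_a ∧
    (a ≠ 0 → c * 2 ^ (n + n_a + n_b) / (a * 2 ^ n_a) = c * 2 ^ (n + n_b) / a) := by
  have hpow : (2:ℕ) ^ (n + n_a + n_b) = 2 ^ (n + n_b) * 2 ^ n_a := by ring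
  have hd : 2 ^ n_a ∣ c_f := by
    have h1 : 2 ^ n_a ∣ a * 2 ^ n_a * bhat := ⟨a * bhat, by ring⟩
    have h2 : 2 ^ n_a ∣ c * 2 ^ (n + n_a + n_b) := ⟨c * 2 ^ (n + n_b), by rw [hpow]; ring⟩
    have : c_f = a * 2 ^ n_a * bhat - c * 2 ^ (n + n_a + n_b) := by omega
    rw [this]; exact Nat.dvd_sub h1 h2
  obtain ⟨k, hk⟩ := hd
  have hpos : 0 < (2:ℕ) ^ n_a := Nat.pow_pos (by norm_num)
  have hdiv : c_f / 2 ^ n_a = k := by rw [hk, Nat.mul_div_cancel_left _ hpos]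
  have heq : a * bhat = c * 2 ^ (n + n_b) + k := by
    have : (a * bhat) * 2 ^ n_a = (c * 2 ^ (n + n_b) + k) * 2 ^ n_a := by
      rw [hk, hpow] at h; linarith [h]
    exact Nat.eq_of_mul_eq_mul_right hpos this
  refine ⟨⟨k, hk⟩, by rw [hdiv]; exact heq, fun ha => ?_⟩
  rw [hpow, ← mul_assoc, Nat.mul_div_mul_right _ _ hpos]
end
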